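/- In the angle-based bootstrap process on an L×L rotating-squares pattern (L ≥ 2), the four corner tiles are never in the closure of any set S that does not contain them; i.e., corner tiles must always be explicitly rigidified. -/
import Mathlib


/-- Components of an `L × L` rotating-squares kirigami pattern, modelled as the cells of
the `(2L−1) × (2L−1)` grid `{0,…,2L−2}²` whose two coordinates have equal parity:
tiles have both coordinates even and holes have both coordinates odd. -/
def IsComp (L : ℕ) (p : ℕ × ℕ) : Prop :=
  p.1 ≤ 2 * L - 2 ∧ p.2 ≤ 2 * L - 2 ∧ p.1 % 2 = p.2 % 2

/-- A tile: a component with both coordinates even. -/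
def IsTile (L : ℕ) (p : ℕ × ℕ) : Prop := IsComp L p ∧ p.1 % 2 = 0

/-- A hole: a component with both coordinates odd. -/
def IsHole (L : ℕ) (p : ℕ × ℕ) : Prop := IsComp L p ∧ p.1 % 2 = 1

/-- Interior nodes of the pattern: mixed-parity grid positions all four of whose
side-neighbours (two tiles and two holes, forming a `2 × 2` block of pairwise diagonally
adjacent cells) lie in the grid. -/
def IsNode (L : ℕ) (c : ℕ × ℕ) : Prop :=
  1 ≤ c.1 ∧ c.1 ≤ 2 * L - 3 ∧ 1 ≤ c.2 ∧ c.2 ≤ 2 * L - 3 ∧ ¬ c.1 % 2 = c.2 % 2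

instance (L : ℕ) : DecidablePred (IsNode L) := fun c => by unfold IsNode; infer_instance

/-- The four components (two tiles and two holes) around the node `c`. -/
def nodeBlock (c : ℕ × ℕ) : Finset (ℕ × ℕ) :=
  {(c.1 - 1, c.2), (c.1 + 1, c.2), (c.1, c.2 - 1), (c.1, c.2 + 1)}

/-- The closure of the set `S` of explicitly rigidified components under the angle-sum
rule: whenever three of the four components around an interior node are rigid, so is the
fourth. -/
inductive AngleRigid (L : ℕ) (S : Set (ℕ × ℕ)) : ℕ × ℕ → Prop
  | expl {p : ℕ × ℕ} : p ∈ S → AngleRigid L S p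
  | node {c p : ℕ × ℕ} : IsNode L c → p ∈ nodeBlock c →
      (∀ q ∈ nodeBlock c, q ≠ p → AngleRigid L S q) → AngleRigid L S p

/-- In the angle-based bootstrap process on an `L × L` rotating-squares pattern
(`L ≥ 2`), a corner tile is never in the closure of a set `S` not containing it:
corner tiles must always be explicitly rigidified. -/
theorem corner_tiles_never_implicit (L : ℕ) (hL : 2 ≤ L) (S : Set (ℕ × ℕ))
    (p : ℕ × ℕ)
    (hp : p ∈ ({(0, 0), (0, 2 * L - 2), (2 * L - 2, 0), (2 * L - 2, 2 * L - 2)} :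
      Set (ℕ × ℕ)))
    (hpS : p ∉ S) : ¬ AngleRigid L S p := by
  intro h
  cases h with
  | expl hmem => exact hpS hmem
  | node hc hb _ =>
    obtain ⟨h1, h2, h3, h4, _⟩ := hc
    simp only [nodeBlock, Finset.mem_insert, Finset.mem_singleton, Prod.ext_iff] at hb
    simp only [Set.mem_insert_iff, Set.mem_singleton_iff, Prod.ext_iff] at hp
    omega
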